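/- The four sets W0, W1, W2, W3 are pairwise disjoint and their union is all of ℕ. -/
import Mathlib


/-- `w a b δ n = n + a⌊n/a⌋ + b⌊n/δ⌋`. -/
def w (a b δ n : ℕ) : ℕ := n + a * (n / a) + b * (n / δ)

lemma wdiff {a δ : ℕ} (ha : 0 < a) (hδ : 0 < δ) (n d : ℕ) :
    w a (a+δ) δ (n+d) = w a (a+δ) δ n + d
      + a * (d / a + if a ≤ n % a + d % a then 1 else 0)
      + (a+δ) * (d / δ + if δ ≤ n % δ + d % δ then 1 else 0) := by
  unfold w
  rw [Nat.add_div ha, Nat.add_div hδ]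
  ring

lemma wmono {a δ : ℕ} (ha : 0 < a) (hδ : 0 < δ) : StrictMono (w a (a+δ) δ) := by
  apply strictMono_nat_of_lt_succ
  intro n
  have h := wdiff ha hδ n 1
  omega

/-- Master extraction: from `w (n+d) = w n + c` get a division-free linear system. -/
lemma wdiff_eq {a δ : ℕ} (ha : 0 < a) (hδ : 0 < δ) {n d c : ℕ}
    (h : w a (a+δ) δ (n+d) = w a (a+δ) δ n + c) :
    ∃ qa qd,
      a*qa + d % a = d ∧ d % a < a ∧
      δ*qd + d % δ = d ∧ d % δ < δ ∧
      n % a < a ∧ n % δ < δ ∧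
      ((a ≤ n % a + d % a ∧ δ ≤ n % δ + d % δ ∧ d + a*qa + a + (a+δ)*qd + (a+δ) = c) ∨
       (a ≤ n % a + d % a ∧ n % δ + d % δ < δ ∧ d + a*qa + a + (a+δ)*qd = c) ∨
       (n % a + d % a < a ∧ δ ≤ n % δ + d % δ ∧ d + a*qa + (a+δ)*qd + (a+δ) = c) ∨
       (n % a + d % a < a ∧ n % δ + d % δ < δ ∧ d + a*qa + (a+δ)*qd = c)) := by
  obtain ⟨qa, hqa⟩ : ∃ q, d / a = q := ⟨_, rfl⟩
  obtain ⟨qd, hqd⟩ : ∃ q, d / δ = q := ⟨_, rfl⟩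
  have Ea : a*qa + d % a = d := by rw [← hqa]; exact Nat.div_add_mod d a
  have Ed : δ*qd + d % δ = d := by rw [← hqd]; exact Nat.div_add_mod d δ
  refine ⟨qa, qd, Ea, Nat.mod_lt d ha, Ed, Nat.mod_lt d hδ, Nat.mod_lt n ha, Nat.mod_lt n hδ, ?_⟩
  rw [wdiff ha hδ, hqa, hqd] at h
  by_cases c1 : a ≤ n % a + d % a <;> by_cases c2 : δ ≤ n % δ + d % δ
  · rw [if_pos c1, if_pos c2, Nat.mul_succ, Nat.mul_succ] at h
    exact Or.inl ⟨c1, c2, by omega⟩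
  · rw [if_pos c1, if_neg c2, Nat.mul_succ, Nat.add_zero] at h
    exact Or.inr (Or.inl ⟨c1, by omega, by omega⟩)
  · rw [if_neg c1, if_pos c2, Nat.add_zero, Nat.mul_succ] at h
    exact Or.inr (Or.inr (Or.inl ⟨by omega, c2, by omega⟩))
  · rw [if_neg c1, if_neg c2, Nat.add_zero, Nat.add_zero] at h
    exact Or.inr (Or.inr (Or.inr ⟨by omega, by omega, by omega⟩))

lemma no_diff_core {a δ : ℕ} (ha : 0 < a) (hlt : a < δ) (hlt2 : δ < 2*a) (m n c : ℕ)
    (hc : c = a ∨ c = a + δ ∨ c = 2*a + δ) (hcpos : 0 < c)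
    (h : w a (a+δ) δ m = w a (a+δ) δ n + c) : False := by
  have hδ : 0 < δ := by omega
  have hnm : n < m := by
    have := (wmono ha hδ).lt_iff_lt (a := n) (b := m)
    omega
  obtain ⟨d, hd, rfl⟩ : ∃ d, 0 < d ∧ m = n + d := ⟨m - n, by omega, by omega⟩
  obtain ⟨qa, qd, Ea, hra, Ed, hrd, hna, hnd, hC⟩ := wdiff_eq ha hδ h
  rcases hC with ⟨c1, c2, e⟩|⟨c1, c2, e⟩|⟨c1, c2, e⟩|⟨c1, c2, e⟩ <;>
  rcases Nat.lt_or_ge qa 3 with h1|h1 <;>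
  rcases Nat.lt_or_ge qd 3 with h2|h2 <;>
  try interval_cases qa <;>
  try interval_cases qd
  all_goals try have b1 : a*3 ≤ a*qa := Nat.mul_le_mul_left a h1
  all_goals try have b2 : (a+δ)*3 ≤ (a+δ)*qd := Nat.mul_le_mul_left (a+δ) h2
  all_goals try have b3 : δ*3 ≤ δ*qd := Nat.mul_le_mul_left δ h2
  all_goals omega

lemma no_diff_a {a δ : ℕ} (ha : 0 < a) (hlt : a < δ) (hlt2 : δ < 2*a) (m n : ℕ) :
    w a (a+δ) δ m ≠ w a (a+δ) δ n + a :=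
  fun h => no_diff_core ha hlt hlt2 m n a (Or.inl rfl) ha h

lemma no_diff_b {a δ : ℕ} (ha : 0 < a) (hlt : a < δ) (hlt2 : δ < 2*a) (m n : ℕ) :
    w a (a+δ) δ m ≠ w a (a+δ) δ n + (a + δ) :=
  fun h => no_diff_core ha hlt hlt2 m n (a+δ) (Or.inr (Or.inl rfl)) (by omega) h

lemma no_diff_2ab {a δ : ℕ} (ha : 0 < a) (hlt : a < δ) (hlt2 : δ < 2*a) (m n : ℕ) :
    w a (a+δ) δ m ≠ w a (a+δ) δ n + (2*a + δ) :=
  fun h => no_diff_core ha hlt hlt2 m n (2*a+δ) (Or.inr (Or.inr rfl)) (by omega) h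

lemma diff_delta_iff {a δ : ℕ} (ha : 0 < a) (hlt : a < δ) (hlt2 : δ < 2*a) (n : ℕ) :
    (∃ m, w a (a+δ) δ m = w a (a+δ) δ n + δ) ↔ (2*a ≤ n % a + δ ∧ n % δ < a) := by
  have hδ : 0 < δ := by omega
  constructor
  · rintro ⟨m, h⟩
    have hnm : n < m := by
      have := (wmono ha hδ).lt_iff_lt (a := n) (b := m)
      omega
    obtain ⟨d, hd, rfl⟩ : ∃ d, 0 < d ∧ m = n + d := ⟨m - n, by omega, by omega⟩
    obtain ⟨qa, qd, Ea, hra, Ed, hrd, hna, hnd, hC⟩ := wdiff_eq ha hδ h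
    rcases hC with ⟨c1, c2, e⟩|⟨c1, c2, e⟩|⟨c1, c2, e⟩|⟨c1, c2, e⟩ <;>
    rcases Nat.lt_or_ge qa 3 with h1|h1 <;>
    rcases Nat.lt_or_ge qd 3 with h2|h2 <;>
    try interval_cases qa <;>
    try interval_cases qd
    all_goals try have b1 : a*3 ≤ a*qa := Nat.mul_le_mul_left a h1
    all_goals try have b2 : (a+δ)*3 ≤ (a+δ)*qd := Nat.mul_le_mul_left (a+δ) h2
    all_goals omega
  · rintro ⟨h1, h2⟩
    refine ⟨n + (δ - a), ?_⟩
    have hda : δ - a < a := by omega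
    have e1 : (δ - a) / a = 0 := Nat.div_eq_of_lt hda
    have e2 : (δ - a) % a = δ - a := Nat.mod_eq_of_lt hda
    have e3 : (δ - a) / δ = 0 := Nat.div_eq_of_lt (by omega)
    have e4 : (δ - a) % δ = δ - a := Nat.mod_eq_of_lt (by omega)
    have hmod : n % a < a := Nat.mod_lt n ha
    rw [wdiff ha hδ, e1, e2, e3, e4, if_pos (by omega : a ≤ n % a + (δ - a)),
      if_neg (by omega : ¬ (δ ≤ n % δ + (δ - a)))]
    simp only [Nat.add_zero, Nat.zero_add, Nat.mul_one, Nat.mul_zero]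
    omega

lemma wzero (a δ : ℕ) : w a (a+δ) δ 0 = 0 := by simp [w]

lemma wperiod {a δ : ℕ} (ha : 0 < a) (hδ : 0 < δ) (n : ℕ) :
    w a (a+δ) δ (n + a*δ) = w a (a+δ) δ n + (a*a + 3*(a*δ)) := by
  have e1 : (a*δ) / a = δ := Nat.mul_div_cancel_left δ ha
  have e2 : (a*δ) % a = 0 := Nat.mul_mod_right a δ
  have e3 : (a*δ) / δ = a := Nat.mul_div_cancel a hδ
  have e4 : (a*δ) % δ = 0 := Nat.mul_mod_left a δ
  have m1 : n % a < a := Nat.mod_lt n ha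
  have m2 : n % δ < δ := Nat.mod_lt n hδ
  rw [wdiff ha hδ, e1, e2, e3, e4, if_neg (by omega), if_neg (by omega)]
  simp only [Nat.add_zero]
  ring

lemma wP {a δ : ℕ} (ha : 0 < a) (hδ : 0 < δ) :
    w a (a+δ) δ (a*δ) = a*a + 3*(a*δ) := by
  have := wperiod ha hδ 0
  simpa [wzero] using this

lemma wlt_iff {a δ : ℕ} (ha : 0 < a) (hδ : 0 < δ) (m : ℕ) :
    w a (a+δ) δ m < a*a + 3*(a*δ) ↔ m < a*δ := by
  rw [← wP ha hδ]
  exact (wmono ha hδ).lt_iff_lt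

/-- backward periodicity for W0 -/
lemma back_period {a δ : ℕ} (ha : 0 < a) (hδ : 0 < δ) (x : ℕ)
    (h : ∃ m, w a (a+δ) δ m = x + (a*a + 3*(a*δ))) : ∃ m, w a (a+δ) δ m = x := by
  obtain ⟨m, hm⟩ := h
  have hm' : a*δ ≤ m := by
    by_contra hc
    have := (wlt_iff ha hδ m).2 (by omega)
    omega
  refine ⟨m - a*δ, ?_⟩
  have := wperiod ha hδ (m - a*δ)
  rw [Nat.sub_add_cancel hm'] at this
  omega

/-- window lemma: the w-values in [c, c+P) are indexed by an interval of length aδ -/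
lemma window {a δ : ℕ} (ha : 0 < a) (hδ : 0 < δ) (c : ℕ) :
    ∃ m0 : ℕ, ∀ m : ℕ,
      (c ≤ w a (a+δ) δ m ∧ w a (a+δ) δ m < c + (a*a + 3*(a*δ))) ↔ (m0 ≤ m ∧ m < m0 + a*δ) := by
  have hex : ∃ m, c ≤ w a (a+δ) δ m := ⟨c, by unfold w; omega⟩
  refine ⟨Nat.find hex, fun m => ⟨fun ⟨h1, h2⟩ => ⟨Nat.find_min' hex h1, ?_⟩, fun ⟨h1, h2⟩ => ⟨?_, ?_⟩⟩⟩
  · by_contra hc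
    push_neg at hc
    have h3 : Nat.find hex + a*δ ≤ m := hc
    have h4 : c ≤ w a (a+δ) δ (Nat.find hex) := Nat.find_spec hex
    have h5 := wperiod ha hδ (Nat.find hex)
    have h6 : w a (a+δ) δ (Nat.find hex + a*δ) ≤ w a (a+δ) δ m :=
      (wmono ha hδ).monotone h3
    omega
  · exact le_trans (Nat.find_spec hex) ((wmono ha hδ).monotone h1)
  · rcases Nat.eq_zero_or_pos (Nat.find hex) with h0 | h0
    · rw [h0] at h2
      have := (wlt_iff ha hδ m).2 (by omega)
      omega
    · have h3 : m ≤ (Nat.find hex - 1) + a*δ := by omega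
      have h4 : ¬ c ≤ w a (a+δ) δ (Nat.find hex - 1) := Nat.find_min hex (by omega)
      have h5 := wperiod ha hδ (Nat.find hex - 1)
      have h6 := (wmono ha hδ).monotone h3
      omega

open Classical in
/-- cardinality of a shifted copy of W0 inside [0, P) -/
lemma count_shift {a δ : ℕ} (ha : 0 < a) (hδ : 0 < δ) (c : ℕ) :
    ((Finset.range (a*a + 3*(a*δ))).filter
      (fun x => ∃ m, w a (a+δ) δ m = x + c)).card = a*δ := by
  classical
  obtain ⟨m0, hm0⟩ := window ha hδ c
  have himg : (Finset.range (a*a + 3*(a*δ))).filter (fun x => ∃ m, w a (a+δ) δ m = x + c)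
      = (Finset.Ico m0 (m0 + a*δ)).image (fun m => w a (a+δ) δ m - c) := by
    ext x
    simp only [Finset.mem_filter, Finset.mem_range, Finset.mem_image, Finset.mem_Ico]
    constructor
    · rintro ⟨hx, m, hm⟩
      refine ⟨m, (hm0 m).1 ⟨by omega, by omega⟩, by omega⟩
    · rintro ⟨m, hm, rfl⟩
      have := (hm0 m).2 hm
      exact ⟨by omega, m, by omega⟩
  rw [himg, Finset.card_image_of_injOn, Nat.card_Ico]
  · omega
  · intro x hx y hy hxy
    simp only [Finset.coe_Ico, Set.mem_Ico] at hx hy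
    have hx' := (hm0 x).2 hx
    have hy' := (hm0 y).2 hy
    replace hxy : w a (a+δ) δ x - c = w a (a+δ) δ y - c := hxy
    have : w a (a+δ) δ x = w a (a+δ) δ y := by omega
    exact (wmono ha hδ).injective this

lemma wlast {a δ : ℕ} (ha2 : 2 ≤ a) (hlt : a < δ) :
    w a (a+δ) δ (a*δ - 1) + (1 + a + (a+δ)) = a*a + 3*(a*δ) := by
  have ha : 0 < a := by omega
  have hδ : 0 < δ := by omega
  have m1 : (a*δ - 1) % a = a - 1 := by
    have h3 : a*(δ-1) + a*1 = a*δ := by rw [← Nat.mul_add]; congr 1; omega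
    have e : a*δ - 1 = (a-1) + a*(δ-1) := by omega
    rw [e, Nat.add_mul_mod_self_left, Nat.mod_eq_of_lt (by omega)]
  have m2 : (a*δ - 1) % δ = δ - 1 := by
    have h3 : δ*(a-1) + δ*1 = δ*a := by rw [← Nat.mul_add]; congr 1; omega
    have h4 : δ*a = a*δ := Nat.mul_comm δ a
    have e : a*δ - 1 = (δ-1) + δ*(a-1) := by omega
    rw [e, Nat.add_mul_mod_self_left, Nat.mod_eq_of_lt (by omega)]
  have d1 : 1 / a = 0 := Nat.div_eq_of_lt (by omega)
  have d2 : 1 % a = 1 := Nat.mod_eq_of_lt (by omega)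
  have d3 : 1 / δ = 0 := Nat.div_eq_of_lt (by omega)
  have d4 : 1 % δ = 1 := Nat.mod_eq_of_lt (by omega)
  have h := wdiff ha hδ (a*δ - 1) 1
  rw [Nat.sub_add_cancel (Nat.mul_pos ha hδ)] at h
  rw [m1, m2, d1, d2, d3, d4, if_pos (by omega), if_pos (by omega)] at h
  rw [wP ha hδ] at h
  simp only [Nat.zero_add, Nat.mul_one] at h
  omega

open Classical in
lemma count_W1 {a δ : ℕ} (ha2 : 2 ≤ a) (hlt : a < δ) :
    ((Finset.range (a*a + 3*(a*δ))).filter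
      (fun x => ∃ n, x = w a (a+δ) δ n + a)).card = a*δ := by
  have ha : 0 < a := by omega
  have hδ : 0 < δ := by omega
  have himg : (Finset.range (a*a + 3*(a*δ))).filter (fun x => ∃ n, x = w a (a+δ) δ n + a)
      = (Finset.range (a*δ)).image (fun n => w a (a+δ) δ n + a) := by
    ext x
    simp only [Finset.mem_filter, Finset.mem_range, Finset.mem_image]
    constructor
    · rintro ⟨hx, n, rfl⟩
      refine ⟨n, ?_, rfl⟩
      rw [← wlt_iff ha hδ]
      omega
    · rintro ⟨n, hn, rfl⟩
      have h1 : w a (a+δ) δ n ≤ w a (a+δ) δ (a*δ - 1) :=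
        (wmono ha hδ).monotone (by omega)
      have h2 := wlast ha2 hlt
      exact ⟨by omega, n, rfl⟩
  rw [himg, Finset.card_image_of_injOn, Finset.card_range]
  intro x _ y _ hxy
  replace hxy : w a (a+δ) δ x + a = w a (a+δ) δ y + a := hxy
  exact (wmono ha hδ).injective (by omega)

open Classical in
lemma count_crt {a δ : ℕ} (ha : 0 < a) (hlt : a < δ) (hlt2 : δ < 2*a)
    (hgcd : Nat.gcd a δ = 1) :
    ((Finset.range (a*δ)).filter (fun n => 2*a ≤ n % a + δ ∧ n % δ < a)).card
      = (δ - a) * a := by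
  have hδ : 0 < δ := by omega
  have hcop : Nat.Coprime a δ := hgcd
  have hcard : ((Finset.range (a*δ)).filter (fun n => 2*a ≤ n % a + δ ∧ n % δ < a)).card
      = ((Finset.Ico (2*a - δ) a) ×ˢ (Finset.range a)).card := by
    apply Finset.card_bij (fun n _ => (n % a, n % δ))
    · intro n hn
      simp only [Finset.mem_filter, Finset.mem_range] at hn
      simp only [Finset.mem_product, Finset.mem_Ico, Finset.mem_range]
      have := Nat.mod_lt n ha
      exact ⟨⟨by omega, by omega⟩, hn.2.2⟩
    · intro n hn n' hn' hmm
      simp only [Finset.mem_filter, Finset.mem_range] at hn hn'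
      simp only [Prod.mk.injEq] at hmm
      have h1 : n ≡ n' [MOD a] := hmm.1
      have h2 : n ≡ n' [MOD δ] := hmm.2
      have h3 : n ≡ n' [MOD a*δ] := (Nat.modEq_and_modEq_iff_modEq_mul hcop).1 ⟨h1, h2⟩
      unfold Nat.ModEq at h3
      rwa [Nat.mod_eq_of_lt hn.1, Nat.mod_eq_of_lt hn'.1] at h3
    · rintro ⟨r, s⟩ hrs
      simp only [Finset.mem_product, Finset.mem_Ico, Finset.mem_range] at hrs
      obtain ⟨⟨hr1, hr2⟩, hs⟩ := hrs
      obtain ⟨k, hk1, hk2⟩ := Nat.chineseRemainder hcop r s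
      refine ⟨k % (a*δ), ?_, ?_⟩
      · have e1 : k % (a*δ) % a = r := by
          rw [Nat.mod_mod_of_dvd k (dvd_mul_right a δ), hk1, Nat.mod_eq_of_lt hr2]
        have e2 : k % (a*δ) % δ = s := by
          rw [Nat.mod_mod_of_dvd k (dvd_mul_left δ a), hk2, Nat.mod_eq_of_lt (by omega)]
        simp only [Finset.mem_filter, Finset.mem_range]
        exact ⟨Nat.mod_lt k (by positivity), by omega, by omega⟩
      · have e1 : k % (a*δ) % a = r := by
          rw [Nat.mod_mod_of_dvd k (dvd_mul_right a δ), hk1, Nat.mod_eq_of_lt hr2]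
        have e2 : k % (a*δ) % δ = s := by
          rw [Nat.mod_mod_of_dvd k (dvd_mul_left δ a), hk2, Nat.mod_eq_of_lt (by omega)]
        rw [e1, e2]
  rw [hcard, Finset.card_product, Nat.card_Ico, Finset.card_range]
  congr 1
  omega

open Classical in
lemma cover_range {a δ : ℕ} (ha2 : 2 ≤ a) (hlt : a < δ) (hlt2 : δ < 2*a)
    (hgcd : Nat.gcd a δ = 1) (x : ℕ) (hx : x < a*a + 3*(a*δ)) :
    (∃ m, w a (a+δ) δ m = x) ∨ (∃ n, x = w a (a+δ) δ n + a) ∨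
    (∃ m, w a (a+δ) δ m = x + (a+δ)) ∨
    ((∃ m, w a (a+δ) δ m = x + δ) ∧ ¬ ∃ m, w a (a+δ) δ m = x) := by
  have ha : 0 < a := by omega
  have hδ : 0 < δ := by omega
  set P := a*a + 3*(a*δ) with hP
  set F0 := (Finset.range P).filter (fun x => ∃ m, w a (a+δ) δ m = x + 0) with hF0
  set F1 := (Finset.range P).filter (fun x => ∃ n, x = w a (a+δ) δ n + a) with hF1
  set F2 := (Finset.range P).filter (fun x => ∃ m, w a (a+δ) δ m = x + (a+δ)) with hF2
  set G := (Finset.range P).filter (fun x => ∃ m, w a (a+δ) δ m = x + δ) with hG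
  set F3 := G.filter (fun x => ¬ ∃ m, w a (a+δ) δ m = x) with hF3
  set H := G.filter (fun x => ∃ m, w a (a+δ) δ m = x) with hH
  -- cardinalities
  have c0 : F0.card = a*δ := count_shift ha hδ 0
  have c1 : F1.card = a*δ := count_W1 ha2 hlt
  have c2 : F2.card = a*δ := count_shift ha hδ (a+δ)
  have cG : G.card = a*δ := count_shift ha hδ δ
  have cGsplit : H.card + F3.card = G.card := Finset.card_filter_add_card_filter_not _
  have cH : H.card = (δ - a) * a := by
    have himg : H = ((Finset.range (a*δ)).filter
        (fun n => 2*a ≤ n % a + δ ∧ n % δ < a)).image (w a (a+δ) δ) := by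
      ext y
      simp only [hH, hG, Finset.mem_filter, Finset.mem_range, Finset.mem_image]
      constructor
      · rintro ⟨⟨hy, hyd⟩, m, rfl⟩
        refine ⟨m, ⟨(wlt_iff ha hδ m).1 (by omega), ?_⟩, rfl⟩
        exact (diff_delta_iff ha hlt hlt2 m).1 (by
          obtain ⟨k, hk⟩ := hyd
          exact ⟨k, hk⟩)
      · rintro ⟨m, ⟨hm, hcond⟩, rfl⟩
        obtain ⟨k, hk⟩ := (diff_delta_iff ha hlt hlt2 m).2 hcond
        have := (wlt_iff ha hδ m).2 hm
        exact ⟨⟨by omega, k, hk⟩, m, rfl⟩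
    rw [himg, Finset.card_image_of_injOn (Set.InjOn.mono (Set.subset_univ _)
      (Set.injOn_of_injective (wmono ha hδ).injective)), count_crt ha hlt hlt2 hgcd]
  have c3 : F3.card = a*δ - (δ - a) * a := by omega
  -- pairwise disjointness
  have d01 : Disjoint F0 F1 := by
    rw [Finset.disjoint_left]
    rintro y hy0 hy1
    simp only [hF0, hF1, Finset.mem_filter] at hy0 hy1
    obtain ⟨m, hm⟩ := hy0.2
    obtain ⟨n, hn⟩ := hy1.2
    exact no_diff_a ha hlt hlt2 m n (by omega)
  have d02 : Disjoint F0 F2 := by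
    rw [Finset.disjoint_left]
    rintro y hy0 hy2
    simp only [hF0, hF2, Finset.mem_filter] at hy0 hy2
    obtain ⟨m, hm⟩ := hy0.2
    obtain ⟨k, hk⟩ := hy2.2
    exact no_diff_b ha hlt hlt2 k m (by omega)
  have d03 : Disjoint F0 F3 := by
    rw [Finset.disjoint_left]
    rintro y hy0 hy3
    simp only [hF0, hF3, Finset.mem_filter] at hy0 hy3
    obtain ⟨m, hm⟩ := hy0.2
    exact hy3.2 ⟨m, by omega⟩
  have d12 : Disjoint F1 F2 := by
    rw [Finset.disjoint_left]
    rintro y hy1 hy2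
    simp only [hF1, hF2, Finset.mem_filter] at hy1 hy2
    obtain ⟨n, hn⟩ := hy1.2
    obtain ⟨k, hk⟩ := hy2.2
    exact no_diff_2ab ha hlt hlt2 k n (by omega)
  have d13 : Disjoint F1 F3 := by
    rw [Finset.disjoint_left]
    rintro y hy1 hy3
    simp only [hF1, hF3, hG, Finset.mem_filter] at hy1 hy3
    obtain ⟨n, hn⟩ := hy1.2
    obtain ⟨k, hk⟩ := hy3.1.2
    exact no_diff_b ha hlt hlt2 k n (by omega)
  have d23 : Disjoint F2 F3 := by
    rw [Finset.disjoint_left]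
    rintro y hy2 hy3
    simp only [hF2, hF3, hG, Finset.mem_filter] at hy2 hy3
    obtain ⟨k, hk⟩ := hy2.2
    obtain ⟨j, hj⟩ := hy3.1.2
    exact no_diff_a ha hlt hlt2 k j (by omega)
  -- the union is everything
  have hsub : F0 ∪ F1 ∪ F2 ∪ F3 ⊆ Finset.range P := by
    intro y hy
    simp only [Finset.mem_union] at hy
    rcases hy with ((h|h)|h)|h <;>
      [exact Finset.filter_subset _ _ h; exact Finset.filter_subset _ _ h;
       exact Finset.filter_subset _ _ h;
       exact Finset.filter_subset _ _ (Finset.filter_subset _ _ h)]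
  have hcardsum : (F0 ∪ F1 ∪ F2 ∪ F3).card = P := by
    rw [Finset.card_union_of_disjoint, Finset.card_union_of_disjoint,
      Finset.card_union_of_disjoint]
    · have key : (δ - a) * a + a * a = a * δ := by
        obtain ⟨e, rfl⟩ : ∃ e, δ = a + e := ⟨δ - a, by omega⟩
        have h1 : (a + e) - a = e := by omega
        rw [h1]
        ring
      omega
    · exact d01
    · exact Finset.disjoint_union_left.2 ⟨d02, d12⟩
    · exact Finset.disjoint_union_left.2 ⟨Finset.disjoint_union_left.2 ⟨d03, d13⟩, d23⟩
  have huniv : F0 ∪ F1 ∪ F2 ∪ F3 = Finset.range P :=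
    Finset.eq_of_subset_of_card_le hsub (by rw [hcardsum, Finset.card_range])
  have hxmem : x ∈ F0 ∪ F1 ∪ F2 ∪ F3 := by
    rw [huniv]
    exact Finset.mem_range.2 hx
  simp only [Finset.mem_union, hF0, hF1, hF2, hF3, hG, Finset.mem_filter] at hxmem
  rcases hxmem with ((⟨_, m, hm⟩|⟨_, hm⟩)|⟨_, hm⟩)|⟨⟨_, hm⟩, hm2⟩
  · exact Or.inl ⟨m, by omega⟩
  · exact Or.inr (Or.inl hm)
  · exact Or.inr (Or.inr (Or.inl hm))
  · exact Or.inr (Or.inr (Or.inr ⟨hm, hm2⟩))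

/-- `W0` is the image of `w`. -/
def W0 (a b δ : ℕ) : Set ℕ := Set.range (w a b δ)

/-- `W1 = W0 + a`. -/
def W1 (a b δ : ℕ) : Set ℕ := {x | ∃ n, x = w a b δ n + a}

/-- `W2 = {x : x + b ∈ W0}`. -/
def W2 (a b δ : ℕ) : Set ℕ := {x | x + b ∈ W0 a b δ}

/-- `W3 = {x : x + δ ∈ W0 and x ∉ W0}`. -/
def W3 (a b δ : ℕ) : Set ℕ := {x | x + δ ∈ W0 a b δ ∧ x ∉ W0 a b δ}

/-- The four sets `W0, W1, W2, W3` are pairwise disjoint and partition `ℕ`. -/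
theorem stmt_14 (a δ : ℕ) (ha : 0 < a) (hlt : a < δ) (hlt2 : δ < 2 * a)
    (hgcd : Nat.gcd a δ = 1) (b : ℕ) (hb : b = a + δ) :
    Disjoint (W0 a b δ) (W1 a b δ) ∧
    Disjoint (W0 a b δ) (W2 a b δ) ∧
    Disjoint (W0 a b δ) (W3 a b δ) ∧
    Disjoint (W1 a b δ) (W2 a b δ) ∧
    Disjoint (W1 a b δ) (W3 a b δ) ∧
    Disjoint (W2 a b δ) (W3 a b δ) ∧
    W0 a b δ ∪ W1 a b δ ∪ W2 a b δ ∪ W3 a b δ = Set.univ := by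
  subst hb
  have hδ : 0 < δ := by omega
  have ha2 : 2 ≤ a := by omega
  have hW0 : ∀ x, x ∈ W0 a (a+δ) δ ↔ ∃ m, w a (a+δ) δ m = x := fun x => Iff.rfl
  have hW1 : ∀ x, x ∈ W1 a (a+δ) δ ↔ ∃ n, x = w a (a+δ) δ n + a := fun x => Iff.rfl
  have hW2 : ∀ x, x ∈ W2 a (a+δ) δ ↔ ∃ m, w a (a+δ) δ m = x + (a+δ) := fun x => Iff.rfl
  have hW3 : ∀ x, x ∈ W3 a (a+δ) δ ↔
      ((∃ m, w a (a+δ) δ m = x + δ) ∧ ¬ ∃ m, w a (a+δ) δ m = x) := fun x => Iff.rfl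
  refine ⟨?_, ?_, ?_, ?_, ?_, ?_, ?_⟩
  · rw [Set.disjoint_left]
    rintro x ⟨m, rfl⟩ hx1
    obtain ⟨n, hn⟩ := (hW1 _).1 hx1
    exact no_diff_a ha hlt hlt2 m n (by omega)
  · rw [Set.disjoint_left]
    rintro x ⟨m, rfl⟩ hx2
    obtain ⟨k, hk⟩ := (hW2 _).1 hx2
    exact no_diff_b ha hlt hlt2 k m (by omega)
  · rw [Set.disjoint_left]
    rintro x ⟨m, rfl⟩ hx3
    exact ((hW3 _).1 hx3).2 ⟨m, rfl⟩
  · rw [Set.disjoint_left]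
    rintro x hx1 hx2
    obtain ⟨n, hn⟩ := (hW1 _).1 hx1
    obtain ⟨k, hk⟩ := (hW2 _).1 hx2
    exact no_diff_2ab ha hlt hlt2 k n (by omega)
  · rw [Set.disjoint_left]
    rintro x hx1 hx3
    obtain ⟨n, hn⟩ := (hW1 _).1 hx1
    obtain ⟨k, hk⟩ := ((hW3 _).1 hx3).1
    exact no_diff_b ha hlt hlt2 k n (by omega)
  · rw [Set.disjoint_left]
    rintro x hx2 hx3
    obtain ⟨k, hk⟩ := (hW2 _).1 hx2
    obtain ⟨j, hj⟩ := ((hW3 _).1 hx3).1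
    exact no_diff_a ha hlt hlt2 k j (by omega)
  · apply Set.eq_univ_of_forall
    intro x
    induction x using Nat.strong_induction_on with
    | _ x ih =>
      simp only [Set.mem_union]
      by_cases hx : x < a*a + 3*(a*δ)
      · rcases cover_range ha2 hlt hlt2 hgcd x hx with h|h|h|h
        · exact Or.inl (Or.inl (Or.inl h))
        · exact Or.inl (Or.inl (Or.inr ((hW1 _).2 h)))
        · exact Or.inl (Or.inr ((hW2 _).2 h))
        · exact Or.inr ((hW3 _).2 h)
      · have hPpos : 0 < a*a + 3*(a*δ) := by positivity
        have hlt' : x - (a*a + 3*(a*δ)) < x := by omega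
        have prev := ih (x - (a*a + 3*(a*δ))) hlt'
        simp only [Set.mem_union] at prev
        rcases prev with ((h|h)|h)|h
        · obtain ⟨m, hm⟩ := (hW0 _).1 h
          refine Or.inl (Or.inl (Or.inl ((hW0 _).2 ⟨m + a*δ, ?_⟩)))
          have := wperiod ha hδ m
          omega
        · obtain ⟨n, hn⟩ := (hW1 _).1 h
          refine Or.inl (Or.inl (Or.inr ((hW1 _).2 ⟨n + a*δ, ?_⟩)))
          have := wperiod ha hδ n
          omega
        · obtain ⟨m, hm⟩ := (hW2 _).1 h
          refine Or.inl (Or.inr ((hW2 _).2 ⟨m + a*δ, ?_⟩))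
          have := wperiod ha hδ m
          omega
        · obtain ⟨⟨m, hm⟩, hnot⟩ := (hW3 _).1 h
          refine Or.inr ((hW3 _).2 ⟨⟨m + a*δ, ?_⟩, ?_⟩)
          · have := wperiod ha hδ m
            omega
          · rintro ⟨k, hk⟩
            apply hnot
            apply back_period ha hδ
            exact ⟨k, by omega⟩
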